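/- Let r ≥ 3 be an integer and let G be the graph obtained from the cycle graph on 3r vertices a₀, a₁, …, a_{3r−1} (with aᵢ adjacent to a_{i+1 mod 3r}) by adding five new vertices x₁, x₂, x₃, x₄, x₅ together with the edges a₀x₁, x₁x₂, x₂x₃, x₃x₄, x₄x₅, and x₅a₆ (so that a₀ and a₆ are joined by an added path of length 6 internally disjoint from the cycle). Then the maximum number of pairwise vertex-disjoint copies of T₁ in G equals r+1, and the minimum size of a vertex set of G covering all copies of T₁ in G also equals r+1. -/

import Mathlib

/-- `T₁`, the perfect binary tree on 3 vertices: the path `0 - 1 - 2`. -/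
def T1 : SimpleGraph (Fin 3) :=
  SimpleGraph.fromRel (fun i j => i.val + 1 = j.val)

/-- Base relation for the graph obtained from the cycle `a₀ a₁ … a_{3r-1}` (the `Sum.inl`
vertices) by adding five new vertices `x₁, …, x₅` (`x_{k+1} = Sum.inr k`) with the edges
`a₀x₁`, `x₁x₂`, `x₂x₃`, `x₃x₄`, `x₄x₅`, `x₅a₆`. -/
def R10 (r : ℕ) : (Fin (3 * r) ⊕ Fin 5) → (Fin (3 * r) ⊕ Fin 5) → Prop
  | .inl i, .inl j => (i.val + 1) % (3 * r) = j.val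
  | .inl i, .inr x => i.val = 0 ∧ x.val = 0
  | .inr x, .inr y => x.val + 1 = y.val
  | .inr x, .inl j => x.val = 4 ∧ j.val = 6

/-- The cycle on `3r` vertices together with an added path `a₀ - x₁ - x₂ - x₃ - x₄ - x₅ - a₆`
of length 6, internally disjoint from the cycle. -/
def G10 (r : ℕ) : SimpleGraph (Fin (3 * r) ⊕ Fin 5) :=
  SimpleGraph.fromRel (R10 r)

namespace CP6

lemma T1_adj01 : T1.Adj 0 1 := by
  rw [T1, SimpleGraph.fromRel_adj]; exact ⟨by decide, Or.inl rfl⟩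

lemma T1_adj12 : T1.Adj 1 2 := by
  rw [T1, SimpleGraph.fromRel_adj]; exact ⟨by decide, Or.inl rfl⟩

def mkHom {V : Type*} {G : SimpleGraph V} (u v w : V)
    (h1 : G.Adj u v) (h2 : G.Adj v w) : T1 →g G where
  toFun := ![u, v, w]
  map_rel' := by
    intro a b hab
    rw [T1, SimpleGraph.fromRel_adj] at hab
    fin_cases a <;> fin_cases b <;>
      simp only [Matrix.cons_val', Matrix.cons_val_zero, Matrix.cons_val_one,
        Matrix.head_cons, Matrix.cons_val_two, Matrix.tail_cons, Fin.isValue] <;>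
      first
        | exact h1 | exact h1.symm | exact h2 | exact h2.symm
        | exact absurd hab (by decide)

lemma mkHom_coe {V : Type*} {G : SimpleGraph V} (u v w : V)
    (h1 : G.Adj u v) (h2 : G.Adj v w) : ⇑(mkHom u v w h1 h2) = ![u, v, w] := rfl

lemma mkHom_inj {V : Type*} {G : SimpleGraph V} {u v w : V}
    (h1 : G.Adj u v) (h2 : G.Adj v w) (huw : u ≠ w) :
    Function.Injective ⇑(mkHom u v w h1 h2) := by
  have h12 : u ≠ v := h1.ne
  have h23 : v ≠ w := h2.ne
  intro a b hab
  rw [mkHom_coe] at hab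
  fin_cases a <;> fin_cases b <;> simp_all

lemma mkHom_range {V : Type*} {G : SimpleGraph V} {u v w : V}
    (h1 : G.Adj u v) (h2 : G.Adj v w) {x : V}
    (hx : x ∈ Set.range ⇑(mkHom u v w h1 h2)) : x = u ∨ x = v ∨ x = w := by
  obtain ⟨a, ha⟩ := hx
  rw [mkHom_coe] at ha
  fin_cases a <;> simp_all

lemma succ_mod (n x : ℕ) (h : x < n) : (x + 1) % n = if x + 1 = n then 0 else x + 1 := by
  split
  · simp [*, Nat.mod_self]
  · exact Nat.mod_eq_of_lt (by omega)



/-- `a`-vertex with index `k` (junk value if out of range). -/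
def pa (r k : ℕ) : Fin (3 * r) ⊕ Fin 5 :=
  if h : k < 3 * r then .inl ⟨k, h⟩ else .inr 0

lemma pa_eq {r k : ℕ} (h : k < 3 * r) : pa r k = .inl ⟨k, h⟩ := dif_pos h

lemma adj_pa {r j : ℕ} (h : j + 1 < 3 * r) : (G10 r).Adj (pa r j) (pa r (j + 1)) := by
  rw [pa_eq (by omega), pa_eq h, G10, SimpleGraph.fromRel_adj]
  refine ⟨by simp [Fin.ext_iff], Or.inl ?_⟩
  exact Nat.mod_eq_of_lt h

lemma adj_a0x1 {r : ℕ} (h : 0 < 3 * r) : (G10 r).Adj (pa r 0) (.inr 0) := by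
  rw [pa_eq h, G10, SimpleGraph.fromRel_adj]
  exact ⟨by simp, Or.inl ⟨rfl, rfl⟩⟩

lemma adj_inr {r : ℕ} (m m' : Fin 5) (h : m.val + 1 = m'.val) :
    (G10 r).Adj (.inr m) (.inr m') := by
  rw [G10, SimpleGraph.fromRel_adj]
  exact ⟨by simp [Fin.ext_iff]; omega, Or.inl h⟩

/-- The `i`-th triple of the packing. -/
def trip (r i : ℕ) : (Fin (3 * r) ⊕ Fin 5) × (Fin (3 * r) ⊕ Fin 5) × (Fin (3 * r) ⊕ Fin 5) :=
  if i = 0 then (pa r 0, .inr 0, .inr 1)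
  else if i = 1 then (.inr 2, .inr 3, .inr 4)
  else (pa r (3 * i - 5), pa r (3 * i - 4), pa r (3 * i - 3))

lemma trip_adj1 {r i : ℕ} (hr : 3 ≤ r) (hi : i ≤ r) :
    (G10 r).Adj (trip r i).1 (trip r i).2.1 := by
  unfold trip
  split
  · exact adj_a0x1 (by omega)
  · split
    · exact adj_inr 2 3 rfl
    · have e : 3 * i - 4 = (3 * i - 5) + 1 := by omega
      rw [e]; exact adj_pa (by omega)

lemma trip_adj2 {r i : ℕ} (hr : 3 ≤ r) (hi : i ≤ r) :
    (G10 r).Adj (trip r i).2.1 (trip r i).2.2 := by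
  unfold trip
  split
  · exact adj_inr 0 1 rfl
  · split
    · exact adj_inr 3 4 rfl
    · have e : 3 * i - 3 = (3 * i - 4) + 1 := by omega
      rw [e]; exact adj_pa (by omega)

lemma trip_ne {r i : ℕ} (hr : 3 ≤ r) (hi : i ≤ r) : (trip r i).1 ≠ (trip r i).2.2 := by
  unfold trip
  split
  · rw [pa_eq (by omega)]; simp
  · split
    · simp [Fin.ext_iff]
    · rename_i h0 h1
      rw [pa_eq (show 3 * i - 5 < 3 * r by omega), pa_eq (show 3 * i - 3 < 3 * r by omega)]
      intro hcon
      rw [Sum.inl.injEq, Fin.mk.injEq] at hcon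
      omega

/-- Class of a vertex: the index of the packing element containing it. -/
def cls (r : ℕ) : (Fin (3 * r) ⊕ Fin 5) → ℕ
  | .inl j => if j.val = 0 then 0 else (j.val - 1) / 3 + 2
  | .inr m => if m.val ≤ 1 then 0 else 1

lemma cls_trip {r i : ℕ} (hr : 3 ≤ r) (hi : i ≤ r) :
    cls r (trip r i).1 = i ∧ cls r (trip r i).2.1 = i ∧ cls r (trip r i).2.2 = i := by
  unfold trip
  split
  · rename_i h0
    rw [pa_eq (by omega)]
    subst h0
    simp [cls]
  · split
    · rename_i h1
      subst h1
      refine ⟨?_, ?_, ?_⟩ <;> simp [cls] <;> decide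
    · rename_i h0 h1
      rw [pa_eq (by omega), pa_eq (by omega), pa_eq (by omega)]
      refine ⟨?_, ?_, ?_⟩ <;> simp only [cls] <;> rw [if_neg (by omega)] <;> omega

/-- The packing homs. -/
def packHom (r : ℕ) (hr : 3 ≤ r) (i : Fin (r + 1)) : T1 →g G10 r :=
  mkHom (trip r i.val).1 (trip r i.val).2.1 (trip r i.val).2.2
    (trip_adj1 hr (by omega)) (trip_adj2 hr (by omega))


/-- Embedding giving the cycle part of the cover. -/
def covEmb (r : ℕ) : Fin r ↪ (Fin (3 * r) ⊕ Fin 5) :=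
  ⟨fun k => Sum.inl ⟨3 * k.val, by have := k.isLt; omega⟩, by
    intro k k' h
    simp only [Sum.inl.injEq, Fin.mk.injEq] at h
    exact Fin.ext (by omega)⟩

/-- The covering set: all `aⱼ` with `3 ∣ j`, together with `x₃`. -/
def cov (r : ℕ) : Finset (Fin (3 * r) ⊕ Fin 5) :=
  (Finset.univ.map (covEmb r)) ∪ {Sum.inr 2}

lemma cov_card (r : ℕ) : (cov r).card = r + 1 := by
  rw [cov, Finset.card_union_of_disjoint, Finset.card_map, Finset.card_univ,
    Fintype.card_fin, Finset.card_singleton]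
  simp [Finset.disjoint_left, covEmb]

lemma inl_mem_cov {r : ℕ} (j : Fin (3 * r)) : Sum.inl j ∈ cov r ↔ j.val % 3 = 0 := by
  simp only [cov, Finset.mem_union, Finset.mem_map, Finset.mem_univ, true_and,
    Finset.mem_singleton, covEmb, Function.Embedding.coeFn_mk]
  constructor
  · rintro (⟨k, hk⟩ | h)
    · change (Sum.inl _ : Fin (3 * r) ⊕ Fin 5) = Sum.inl j at hk
      rw [Sum.inl.injEq, Fin.ext_iff] at hk
      simp at hk; omega
    · exact absurd h (by simp)
  · intro h
    left
    have hlt := j.isLt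
    refine ⟨⟨j.val / 3, by omega⟩, ?_⟩
    change (Sum.inl _ : Fin (3 * r) ⊕ Fin 5) = Sum.inl j
    rw [Sum.inl.injEq, Fin.ext_iff]
    simp; omega

lemma inr_mem_cov {r : ℕ} (m : Fin 5) : Sum.inr m ∈ cov r ↔ m.val = 2 := by
  simp only [cov, Finset.mem_union, Finset.mem_map, Finset.mem_univ, true_and,
    Finset.mem_singleton, covEmb, Function.Embedding.coeFn_mk]
  constructor
  · rintro (⟨k, hk⟩ | h)
    · exact absurd hk (by simp)
    · rw [Sum.inr.injEq] at h; subst h; rfl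
  · intro h
    right
    rw [Sum.inr.injEq, Fin.ext_iff, h]
    rfl

/-- The unique neighbour outside the cover of a vertex outside the cover. -/
def partner (r : ℕ) : (Fin (3 * r) ⊕ Fin 5) → (Fin (3 * r) ⊕ Fin 5)
  | .inl i =>
      if i.val % 3 = 1 then
        .inl ⟨(i.val + 1) % (3 * r), Nat.mod_lt _ (by have := i.isLt; omega)⟩
      else .inl ⟨i.val - 1, by have := i.isLt; omega⟩
  | .inr m =>
      if m.val = 0 then .inr 1
      else if m.val = 1 then .inr 0
      else if m.val = 3 then .inr 4
      else .inr 3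

lemma partner_unique {r : ℕ} {v w : Fin (3 * r) ⊕ Fin 5} (hadj : (G10 r).Adj v w)
    (hv : v ∉ cov r) (hw : w ∉ cov r) : w = partner r v := by
  rw [G10, SimpleGraph.fromRel_adj] at hadj
  obtain ⟨hne, hR⟩ := hadj
  rcases v with i | m <;> rcases w with j | m'
  · -- inl / inl
    rw [inl_mem_cov] at hv hw
    have hR' : (i.val + 1) % (3 * r) = j.val ∨ (j.val + 1) % (3 * r) = i.val := hR
    have hI := i.isLt
    have hJ := j.isLt
    have e1 := succ_mod (3 * r) i.val hI
    have e2 := succ_mod (3 * r) j.val hJ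
    simp only [partner]
    split_ifs with h3
    · rw [Sum.inl.injEq, Fin.ext_iff]
      show j.val = (i.val + 1) % (3 * r)
      simp only [e1, e2] at hR' ⊢
      split_ifs at hR' ⊢ <;> omega
    · rw [Sum.inl.injEq, Fin.ext_iff]
      show j.val = i.val - 1
      simp only [e1, e2] at hR'
      split_ifs at hR' <;> omega
  · -- inl / inr
    rw [inl_mem_cov] at hv
    have hR' : (i.val = 0 ∧ m'.val = 0) ∨ (m'.val = 4 ∧ i.val = 6) := hR
    rcases hR' with ⟨h, _⟩ | ⟨_, h⟩ <;> omega
  · -- inr / inl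
    rw [inr_mem_cov] at hv
    rw [inl_mem_cov] at hw
    have hR' : (m.val = 4 ∧ j.val = 6) ∨ (j.val = 0 ∧ m.val = 0) := hR
    rcases hR' with ⟨_, h⟩ | ⟨h, _⟩ <;> omega
  · -- inr / inr
    rw [inr_mem_cov] at hv hw
    have hR' : m.val + 1 = m'.val ∨ m'.val + 1 = m.val := hR
    have hM := m.isLt
    have hM' := m'.isLt
    simp only [partner]
    split_ifs with h0 h1 h3
    · rw [Sum.inr.injEq]; exact Fin.ext (show m'.val = 1 by omega)
    · rw [Sum.inr.injEq]; exact Fin.ext (show m'.val = 0 by omega)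
    · rw [Sum.inr.injEq]; exact Fin.ext (show m'.val = 4 by omega)
    · rw [Sum.inr.injEq]; exact Fin.ext (show m'.val = 3 by omega)



lemma cls_range {r : ℕ} (hr : 3 ≤ r) (i : Fin (r + 1)) {x}
    (hx : x ∈ Set.range ⇑(packHom r hr i)) : cls r x = i.val := by
  rcases mkHom_range _ _ hx with h | h | h <;> subst h
  · exact (cls_trip hr (by omega)).1
  · exact (cls_trip hr (by omega)).2.1
  · exact (cls_trip hr (by omega)).2.2

end CP6

open CP6

/-- For `r ≥ 3`, in the graph obtained from the cycle on `3r` vertices by adding a path of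
length `6` joining `a₀` and `a₆`, the maximum number of pairwise vertex-disjoint copies of
`T₁` equals `r + 1`, and the minimum size of a vertex set covering all copies of `T₁` also
equals `r + 1`. -/
theorem cycle_plus_path6_packing_covering (r : ℕ) (hr : 3 ≤ r) :
    ((∃ f : Fin (r + 1) → (T1 →g G10 r),
        (∀ i, Function.Injective ⇑(f i)) ∧
        Pairwise fun i j => Disjoint (Set.range ⇑(f i)) (Set.range ⇑(f j))) ∧
      (∀ (ι : Type) [Fintype ι] (f : ι → (T1 →g G10 r)),
        (∀ i, Function.Injective ⇑(f i)) →
        (Pairwise fun i j => Disjoint (Set.range ⇑(f i)) (Set.range ⇑(f j))) →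
        Fintype.card ι ≤ r + 1)) ∧
    ((∃ U : Finset (Fin (3 * r) ⊕ Fin 5),
        U.card = r + 1 ∧
        ∀ f : T1 →g G10 r, Function.Injective ⇑f → ∃ v ∈ U, v ∈ Set.range ⇑f) ∧
      (∀ U : Finset (Fin (3 * r) ⊕ Fin 5),
        (∀ f : T1 →g G10 r, Function.Injective ⇑f → ∃ v ∈ U, v ∈ Set.range ⇑f) →
        r + 1 ≤ U.card)) := by
  refine ⟨⟨⟨packHom r hr, ?_, ?_⟩, ?_⟩, ⟨cov r, cov_card r, ?_⟩, ?_⟩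
  · -- injectivity of the packing homs
    intro i
    exact mkHom_inj _ _ (trip_ne hr (by omega))
  · -- pairwise disjoint ranges
    intro i j hij
    rw [Set.disjoint_left]
    intro x hxi hxj
    exact hij (Fin.ext ((cls_range hr i hxi).symm.trans (cls_range hr j hxj)))
  · -- packing upper bound
    intro ι _ f hinj hdis
    have hg : Function.Injective fun p : ι × Fin 3 => f p.1 p.2 := by
      rintro ⟨i, a⟩ ⟨j, b⟩ h
      simp only at h
      by_cases hij : i = j
      · subst hij
        exact Prod.ext rfl (hinj i h)
      · exact ((Set.disjoint_left.mp (hdis hij) ⟨a, rfl⟩) ⟨b, h.symm⟩).elim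
    have hcard := Fintype.card_le_of_injective _ hg
    simp only [Fintype.card_prod, Fintype.card_sum, Fintype.card_fin] at hcard
    omega
  · -- the cover covers
    intro f hf
    by_contra hcon
    push_neg at hcon
    have h0 : f 0 ∉ cov r := fun h => hcon _ h ⟨0, rfl⟩
    have h1 : f 1 ∉ cov r := fun h => hcon _ h ⟨1, rfl⟩
    have h2 : f 2 ∉ cov r := fun h => hcon _ h ⟨2, rfl⟩
    have a01 : (G10 r).Adj (f 1) (f 0) := (f.map_adj T1_adj01).symm
    have a12 : (G10 r).Adj (f 1) (f 2) := f.map_adj T1_adj12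
    have e0 : f 0 = partner r (f 1) := partner_unique a01 h1 h0
    have e2 : f 2 = partner r (f 1) := partner_unique a12 h1 h2
    exact absurd (hf (e0.trans e2.symm)) (by decide)
  · -- cover lower bound
    intro U hU
    have hchoice : ∀ i : Fin (r + 1), ∃ v, v ∈ U ∧ v ∈ Set.range ⇑(packHom r hr i) := by
      intro i
      obtain ⟨v, hvU, hvr⟩ := hU (packHom r hr i) (mkHom_inj _ _ (trip_ne hr (by omega)))
      exact ⟨v, hvU, hvr⟩
    choose g hgU hgr using hchoice
    have hginj : Function.Injective g := by
      intro i j hij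
      apply Fin.ext
      have hi := cls_range hr i (hgr i)
      have hj := cls_range hr j (hgr j)
      rw [← hi, ← hj, hij]
    calc r + 1 = (Finset.univ : Finset (Fin (r + 1))).card := by simp
      _ ≤ U.card := Finset.card_le_card_of_injOn g (fun i _ => hgU i) hginj.injOn
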